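/- Let n = p^α q^β with p, q distinct primes, α ≥ 1, β ≥ 1. If g ∈ ℤ[x] has degree n − 1, non-negative coefficients, and Φ_n divides g, then there exist s₁, s₂ ∈ ℤ[x] with non-negative coefficients such that g(x) = s₁(x)·Φ_p(x^{n/p}) + s₂(x)·Φ_q(x^{n/q}). -/

import Mathlib

open Polynomial Finset IntermediateField

-- H1: split a range sum
lemma sum_range_mul {M : Type*} [AddCommMonoid M] (m k : ℕ) (hm : 0 < m) (f : ℕ → M) :
    ∑ i ∈ Finset.range (m * k), f i
      = ∑ j ∈ Finset.range m, ∑ l ∈ Finset.range k, f (j + l * m) := by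
  rw [← Finset.sum_product']
  symm
  apply Finset.sum_nbij' (i := fun x => x.1 + x.2 * m) (j := fun i => (i % m, i / m))
  · rintro ⟨a, b⟩ hab
    simp only [Finset.mem_product, Finset.mem_range] at hab ⊢
    calc a + b * m < m + b * m := by omega
    _ = (b+1) * m := by ring
    _ ≤ k * m := Nat.mul_le_mul_right m hab.2
    _ = m * k := Nat.mul_comm _ _
  · intro i hi
    simp only [Finset.mem_range, Finset.mem_product] at hi ⊢
    exact ⟨Nat.mod_lt _ hm, Nat.div_lt_of_lt_mul (by omega)⟩
  · rintro ⟨a, b⟩ hab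
    simp only [Finset.mem_product, Finset.mem_range] at hab
    have h1 : (a + b * m) % m = a := by
      rw [Nat.add_mul_mod_self_right, Nat.mod_eq_of_lt hab.1]
    have h2 : (a + b * m) / m = b := by
      rw [Nat.add_mul_div_right _ _ hm, Nat.div_eq_of_lt hab.1]; omega
    simp [h1, h2]
  · intro i hi; simp [Nat.mod_add_div']
  · intros; rfl

-- H2: mod formula
lemma mod_formula {u p w t k : ℕ} (hw : w < u) (ht : t < p) :
    (w + t * u + k * u) % (p * u) = w + ((t + k) % p) * u := by
  have hu : 0 < u := by omega
  have : w + t * u + k * u = w + ((t + k) % p) * u + ((t + k) / p) * (p * u) := by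
    have := Nat.mod_add_div (t + k) p
    calc w + t * u + k * u = w + (t + k) * u := by ring
    _ = w + ((t + k) % p + p * ((t + k) / p)) * u := by rw [this]
    _ = w + ((t + k) % p) * u + ((t + k) / p) * (p * u) := by ring
  rw [this, Nat.add_mul_mod_self_right, Nat.mod_eq_of_lt]
  have h1 : (t + k) % p < p := Nat.mod_lt _ (by omega)
  calc w + ((t + k) % p) * u < u + ((t + k) % p) * u := by omega
  _ = ((t + k) % p + 1) * u := by ring
  _ ≤ p * u := Nat.mul_le_mul_right u (by omega)

noncomputable def polyOf {R : Type*} [CommRing R] (f : ℕ → R) (N : ℕ) : R[X] :=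
  ∑ i ∈ Finset.range N, Polynomial.C (f i) * Polynomial.X ^ i

lemma polyOf_coeff {R : Type*} [CommRing R] (f : ℕ → R) (N j : ℕ) :
    (polyOf f N).coeff j = if j < N then f j else 0 := by
  rw [polyOf, Polynomial.finset_sum_coeff]
  simp only [Polynomial.coeff_C_mul, Polynomial.coeff_X_pow]
  by_cases h : j < N
  · rw [Finset.sum_eq_single j, if_pos rfl, mul_one, if_pos h]
    · intro b _ hb; simp [Ne.symm hb]
    · intro hj; exact absurd (Finset.mem_range.2 h) hj
  · rw [if_neg h, Finset.sum_eq_zero]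
    intro b hb
    have : j ≠ b := by rw [Finset.mem_range] at hb; omega
    simp [this]

lemma polyOf_degree_lt {R : Type*} [CommRing R] (f : ℕ → R) (N : ℕ) :
    (polyOf f N).degree < (N : ℕ) := by
  rw [Polynomial.degree_lt_iff_coeff_zero]
  intro i hi
  have hi' : N ≤ i := by exact_mod_cast hi
  rw [polyOf_coeff, if_neg (by omega)]

lemma coeff_of_geom_dvd {R : Type*} [CommRing R] [IsDomain R] {m k : ℕ} (hm : 0 < m)
    (hk : 0 < k) {G F : R[X]} (hG : G = ∑ i ∈ Finset.range k, (X ^ m) ^ i)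
    (hGmonic : G.Monic) (hGdeg : G.natDegree = m * k - m)
    (hdvd : G ∣ F) (hdeg : F.degree < ((m * k : ℕ) : WithBot ℕ)) :
    ∀ j, j < m * k → F.coeff j = F.coeff (j % m) := by
  obtain ⟨T, rfl⟩ := hdvd
  have hT : T.degree < (m : ℕ) := by
    rcases eq_or_ne T 0 with rfl | hT0
    · rw [Polynomial.degree_zero]
      exact WithBot.bot_lt_coe _
    · have hmul := Polynomial.degree_mul (p := G) (q := T)
      rw [hmul, Polynomial.degree_eq_natDegree hGmonic.ne_zero, hGdeg,
        Polynomial.degree_eq_natDegree hT0] at hdeg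
      rw [Polynomial.degree_eq_natDegree hT0]
      have : ((m*k-m : ℕ) : WithBot ℕ) + (T.natDegree : ℕ) < ((m*k : ℕ) : WithBot ℕ) := hdeg
      rw [← Nat.cast_add] at this
      have h2 : (m*k-m) + T.natDegree < m*k := by exact_mod_cast this
      have hmk : m ≤ m * k := Nat.le_mul_of_pos_right m hk
      have h3 : T.natDegree < m := by omega
      exact_mod_cast h3
  have hTc : ∀ i, m ≤ i → T.coeff i = 0 := fun i hi =>
    Polynomial.coeff_eq_zero_of_degree_lt (lt_of_lt_of_le hT (by exact_mod_cast Nat.cast_le.2 hi))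
  have key : ∀ w l : ℕ, w < m → l < k → (G * T).coeff (w + l * m) = T.coeff w := by
    intro w l hw hl
    have hml : m * l = l * m := Nat.mul_comm _ _
    rw [hG, Finset.sum_mul, Polynomial.finset_sum_coeff]
    rw [Finset.sum_eq_single l]
    · rw [← pow_mul, Polynomial.X_pow_mul, Polynomial.coeff_mul_X_pow']
      rw [if_pos (by omega), mul_comm m l]
      congr 1; omega
    · intro i hi hne
      rw [← pow_mul, Polynomial.X_pow_mul, Polynomial.coeff_mul_X_pow']
      have hmi : m * i = i * m := Nat.mul_comm _ _
      rcases lt_or_gt_of_ne hne with h | h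
      · have hle : m * i + m ≤ m * l := by
          calc m * i + m = m * (i+1) := by ring
          _ ≤ m * l := Nat.mul_le_mul_left m h
        rw [if_pos (by omega)]
        apply hTc
        omega
      · rw [if_neg]
        intro hc
        have : m * l + m ≤ m * i := by
          calc m * l + m = m * (l+1) := by ring
          _ ≤ m * i := Nat.mul_le_mul_left m h
        omega
    · intro h; exact absurd (Finset.mem_range.2 hl) h
  intro j hj
  have hw : j % m < m := Nat.mod_lt _ hm
  have h1 : (G*T).coeff j = T.coeff (j % m) := by
    have := key (j % m) (j / m) hw (Nat.div_lt_of_lt_mul (by omega))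
    rwa [Nat.mod_add_div'] at this
  have h2 : (G*T).coeff (j % m) = T.coeff (j % m) := by
    have := key (j % m) 0 hw hk
    simpa using this
  rw [h1, h2]

lemma sum_shift_mod {M : Type*} [AddCommMonoid M] (p t : ℕ) (ht : t < p) (f : ℕ → M) :
    ∑ k ∈ Finset.range p, f ((t + k) % p) = ∑ k ∈ Finset.range p, f k := by
  have hp : 0 < p := by omega
  apply Finset.sum_nbij' (i := fun k => (t + k) % p) (j := fun k => (k + (p - t)) % p)
  · intro a _; exact Finset.mem_range.2 (Nat.mod_lt _ hp)
  · intro a _; exact Finset.mem_range.2 (Nat.mod_lt _ hp)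
  · intro a ha
    rw [Nat.mod_add_mod]
    have : t + a + (p - t) = a + p := by omega
    rw [this, Nat.add_mod_right, Nat.mod_eq_of_lt (Finset.mem_range.1 ha)]
  · intro a ha
    rw [Nat.add_mod_mod]
    have : t + (a + (p - t)) = a + p := by omega
    rw [this, Nat.add_mod_right, Nat.mod_eq_of_lt (Finset.mem_range.1 ha)]
  · intros; rfl

lemma blocksum {R : Type*} [CommRing R] (u p s : ℕ) (hu : 0 < u) (hs : s < u * p) :
    (X : R[X]) ^ (s % u) * (∑ k ∈ Finset.range p, ((X : R[X]) ^ u) ^ k)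
      = ∑ k ∈ Finset.range p, (X : R[X]) ^ ((s + k * u) % (u * p)) := by
  have hp : 0 < p := by
    rcases Nat.eq_zero_or_pos p with h | h
    · subst h; omega
    · exact h
  have ht : s / u < p := Nat.div_lt_of_lt_mul (by omega)
  have hw : s % u < u := Nat.mod_lt _ hu
  have hrw : ∀ k, (s + k * u) % (u * p) = s % u + ((s / u + k) % p) * u := by
    intro k
    have h1 : s = s % u + (s / u) * u := (Nat.mod_add_div' s u).symm
    calc (s + k * u) % (u * p) = (s % u + (s / u) * u + k * u) % (p * u) := by
          rw [← h1, Nat.mul_comm u p]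
    _ = s % u + ((s / u + k) % p) * u := mod_formula hw ht
  rw [Finset.mul_sum]
  rw [Finset.sum_congr rfl (fun k _ => by rw [hrw k] : ∀ k ∈ Finset.range p, (X : R[X]) ^ ((s + k * u) % (u * p)) = (X:R[X]) ^ (s % u + ((s / u + k) % p) * u))]
  rw [sum_shift_mod p (s/u) ht (fun j => (X : R[X]) ^ (s % u + j * u))]
  apply Finset.sum_congr rfl
  intro k _
  rw [← pow_mul, ← pow_add, Nat.mul_comm u k]

lemma crt_injOn (P Q : ℕ) (hP : 0 < P) (hQ : 0 < Q) (hco : Nat.Coprime P Q) :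
    Set.InjOn (fun x : ℕ × ℕ => (x.1 * Q + x.2 * P) % (P * Q))
      ↑(Finset.range P ×ˢ Finset.range Q) := by
  rintro ⟨a, b⟩ hab ⟨a', b'⟩ hab' h
  simp only [Finset.coe_product, Set.mem_prod, Finset.mem_coe, Finset.mem_range] at hab hab'
  simp only at h
  have hmod : a * Q + b * P ≡ a' * Q + b' * P [MOD P * Q] := by
    unfold Nat.ModEq; simpa using h
  have hP' : a * Q + b * P ≡ a' * Q + b' * P [MOD P] := hmod.of_mul_right Q
  have hQ' : a * Q + b * P ≡ a' * Q + b' * P [MOD Q] := hmod.of_mul_left P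
  have hbP : ∀ c : ℕ, c * P ≡ 0 [MOD P] := fun c => (Nat.modEq_zero_iff_dvd).2 ⟨c, Nat.mul_comm _ _⟩
  have haQ : ∀ c : ℕ, c * Q ≡ 0 [MOD Q] := fun c => (Nat.modEq_zero_iff_dvd).2 ⟨c, Nat.mul_comm _ _⟩
  have h1 : a * Q ≡ a' * Q [MOD P] := by
    calc a * Q ≡ a * Q + b * P [MOD P] := by simpa using (Nat.ModEq.refl (a*Q)).add (hbP b).symm
    _ ≡ a' * Q + b' * P [MOD P] := hP'
    _ ≡ a' * Q + 0 [MOD P] := (Nat.ModEq.refl (a'*Q)).add (hbP b')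
    _ = a' * Q := by ring
  have h2 : b * P ≡ b' * P [MOD Q] := by
    calc b * P ≡ a * Q + b * P [MOD Q] := by
          have := ((haQ a).add (Nat.ModEq.refl (b*P))).symm; simpa using this
    _ ≡ a' * Q + b' * P [MOD Q] := hQ'
    _ ≡ 0 + b' * P [MOD Q] := (haQ a').add (Nat.ModEq.refl (b'*P))
    _ = b' * P := by ring
  have ha : a = a' := by
    have := Nat.ModEq.cancel_right_of_coprime (by simpa [Nat.Coprime] using hco) h1
    rwa [Nat.ModEq, Nat.mod_eq_of_lt hab.1, Nat.mod_eq_of_lt hab'.1] at this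
  have hb : b = b' := by
    have := Nat.ModEq.cancel_right_of_coprime (by simpa [Nat.Coprime] using hco.symm) h2
    rwa [Nat.ModEq, Nat.mod_eq_of_lt hab.2, Nat.mod_eq_of_lt hab'.2] at this
  simp [ha, hb]

lemma crt_image (P Q : ℕ) (hP : 0 < P) (hQ : 0 < Q) (hco : Nat.Coprime P Q) :
    Finset.image (fun x : ℕ × ℕ => (x.1 * Q + x.2 * P) % (P * Q))
      (Finset.range P ×ˢ Finset.range Q) = Finset.range (P * Q) := by
  apply Finset.eq_of_subset_of_card_le
  · intro i hi
    rw [Finset.mem_image] at hi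
    obtain ⟨x, _, rfl⟩ := hi
    exact Finset.mem_range.2 (Nat.mod_lt _ (Nat.mul_pos hP hQ))
  · rw [Finset.card_range, Finset.card_image_of_injOn (crt_injOn P Q hP hQ hco)]
    simp [Nat.mul_comm]

lemma minpoly_pow_eq_cyclotomic {p q α β : ℕ} (hp : p.Prime) (hq : q.Prime) (hpq : p ≠ q)
    (hα : 1 ≤ α) (hβ : 1 ≤ β) (N : ℕ+) (hN : (N : ℕ) = p ^ α * q ^ β)
    (K : Type*) [Field K] [CharZero K] [Algebra ℚ K] [IsCyclotomicExtension {(N : ℕ)} ℚ K]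
    (ζ : K) (hζ : IsPrimitiveRoot ζ (N : ℕ)) :
    cyclotomic (p ^ α) (↥(ℚ⟮ζ ^ (p ^ α)⟯ : IntermediateField ℚ K))
      = minpoly (↥(ℚ⟮ζ ^ (p ^ α)⟯ : IntermediateField ℚ K)) (ζ ^ (q ^ β)) := by
  have hP0 : 0 < p ^ α := pow_pos hp.pos α
  have hQ0 : 0 < q ^ β := pow_pos hq.pos β
  have hP1 : 1 < p ^ α := Nat.one_lt_pow (by omega) hp.one_lt
  have hQ1 : 1 < q ^ β := Nat.one_lt_pow (by omega) hq.one_lt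
  have hn0 : 0 < (N : ℕ) := N.pos
  have hco : Nat.Coprime (p ^ α) (q ^ β) :=
    Nat.Coprime.pow α β ((Nat.coprime_primes hp hq).2 hpq)
  set η := ζ ^ (p ^ α) with hηdef
  set ξ := ζ ^ (q ^ β) with hξdef
  set L : IntermediateField ℚ K := ℚ⟮η⟯ with hLdef
  have hη : IsPrimitiveRoot η (q ^ β) := hζ.pow hn0 hN
  have hξ : IsPrimitiveRoot ξ (p ^ α) := hζ.pow hn0 (by rw [hN]; ring)
  have hηint : IsIntegral ℚ η := (hη.isIntegral hQ0).tower_top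
  have hξint : IsIntegral ℚ ξ := (hξ.isIntegral hP0).tower_top
  have hξintL : IsIntegral L ξ := hξint.tower_top
  have hfinK : Module.finrank ℚ K = ((N : ℕ)).totient :=
    IsCyclotomicExtension.finrank K (cyclotomic.irreducible_rat N.pos)
  haveI : NeZero ((q ^ β : ℕ) : ℚ) := ⟨by exact_mod_cast hQ0.ne'⟩
  have hminη : cyclotomic (q ^ β) ℚ = minpoly ℚ η :=
    hη.minpoly_eq_cyclotomic_of_irreducible (cyclotomic.irreducible_rat hQ0)
  have hfinL : Module.finrank ℚ L = (q ^ β).totient := by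
    rw [adjoin.finrank hηint, ← hminη, natDegree_cyclotomic]
  have htot : ((N : ℕ)).totient = (p ^ α).totient * (q ^ β).totient := by
    rw [hN, Nat.totient_mul hco]
  have hfinLK : Module.finrank L K = (p ^ α).totient := by
    have h := Module.finrank_mul_finrank ℚ L K
    rw [hfinL, hfinK, htot, mul_comm ((p^α).totient) _] at h
    exact Nat.eq_of_mul_eq_mul_left (Nat.totient_pos.2 hQ0) h
  have hζmem : ζ ∈ (L⟮ξ⟯ : IntermediateField L K) := by
    obtain ⟨s, -, hs⟩ := Nat.exists_mul_mod_eq_one_of_coprime hco.symm hP1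
    obtain ⟨t, -, ht⟩ := Nat.exists_mul_mod_eq_one_of_coprime hco hQ1
    set x := q ^ β * s + p ^ α * t with hxdef
    have hx1 : x ≡ 1 [MOD (N : ℕ)] := by
      rw [hN]
      apply (Nat.modEq_and_modEq_iff_modEq_mul hco).1
      constructor
      · have h1 : q ^ β * s ≡ 1 [MOD p ^ α] := by
          unfold Nat.ModEq; rw [hs, Nat.mod_eq_of_lt hP1]
        have h2 : p ^ α * t ≡ 0 [MOD p ^ α] :=
          (Nat.modEq_zero_iff_dvd).2 ⟨t, rfl⟩
        simpa [hxdef] using h1.add h2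
      · have h1 : q ^ β * s ≡ 0 [MOD q ^ β] :=
          (Nat.modEq_zero_iff_dvd).2 ⟨s, rfl⟩
        have h2 : p ^ α * t ≡ 1 [MOD q ^ β] := by
          unfold Nat.ModEq; rw [ht, Nat.mod_eq_of_lt hQ1]
        simpa [hxdef] using h1.add h2
    have hζx : ζ = ξ ^ s * η ^ t := by
      have e1 : ξ ^ s * η ^ t = ζ ^ x := by
        rw [hξdef, hηdef, ← pow_mul, ← pow_mul, ← pow_add]
      have hzmod : ∀ y : ℕ, ζ ^ y = ζ ^ (y % (N : ℕ)) := by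
        intro y
        conv_lhs => rw [← Nat.mod_add_div y (N : ℕ)]
        rw [pow_add, pow_mul, hζ.pow_eq_one, one_pow, mul_one]
      rw [e1, hzmod x, hx1, ← hzmod 1, pow_one]
    rw [hζx]
    have hξmem : ξ ∈ (L⟮ξ⟯ : IntermediateField L K) := mem_adjoin_simple_self L ξ
    have hηmem : η ∈ (L⟮ξ⟯ : IntermediateField L K) := by
      have hmem : η ∈ L := mem_adjoin_simple_self ℚ η
      have := (L⟮ξ⟯ : IntermediateField L K).algebraMap_mem ⟨η, hmem⟩
      simpa using this
    exact mul_mem (pow_mem hξmem s) (pow_mem hηmem t)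
  have hLtop : (L⟮ξ⟯ : IntermediateField L K) = ⊤ := by
    rw [eq_top_iff]
    intro x _
    have hadj : Algebra.adjoin ℚ ({ζ} : Set K) = ⊤ :=
      IsCyclotomicExtension.adjoin_primitive_root_eq_top hζ
    have hx : x ∈ Algebra.adjoin ℚ ({ζ} : Set K) := by rw [hadj]; trivial
    have hle : Algebra.adjoin ℚ ({ζ} : Set K) ≤
        ((L⟮ξ⟯ : IntermediateField L K).restrictScalars ℚ).toSubalgebra := by
      apply Algebra.adjoin_le
      intro y hy
      rw [Set.mem_singleton_iff] at hy
      subst hy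
      exact hζmem
    exact hle hx
  have hdeg : (minpoly L ξ).natDegree = (p ^ α).totient := by
    rw [← adjoin.finrank hξintL, hLtop, finrank_top']
    exact hfinLK
  apply eq_of_monic_of_dvd_of_natDegree_le (minpoly.monic hξintL) (cyclotomic.monic _ _)
  · apply minpoly.dvd
    rw [aeval_def, eval₂_eq_eval_map, map_cyclotomic]
    exact (hξ.isRoot_cyclotomic hP0)
  · rw [natDegree_cyclotomic, hdeg]

lemma coeff_relation {p q α β : ℕ} (hp : p.Prime) (hq : q.Prime) (hpq : p ≠ q)
    (hα : 1 ≤ α) (hβ : 1 ≤ β) (N : ℕ+) (hN : (N : ℕ) = p ^ α * q ^ β)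
    (K : Type*) [Field K] [CharZero K] [Algebra ℚ K] [IsCyclotomicExtension {(N : ℕ)} ℚ K]
    (ζ : K) (hζ : IsPrimitiveRoot ζ (N : ℕ)) (c : ℕ → ℕ → ℤ)
    (hsum : ∑ a ∈ Finset.range (p ^ α), ∑ b ∈ Finset.range (q ^ β),
      (c a b : K) * ((ζ ^ (q ^ β)) ^ a * (ζ ^ (p ^ α)) ^ b) = 0) :
    ∀ a, a < p ^ α → ∀ b, b < q ^ β →
      c a b - c (a % p ^ (α - 1)) b = c a (b % q ^ (β - 1)) - c (a % p ^ (α - 1)) (b % q ^ (β - 1)) := by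
  have hP0 : 0 < p ^ α := pow_pos hp.pos α
  have hQ0 : 0 < q ^ β := pow_pos hq.pos β
  have hp'0 : 0 < p ^ (α - 1) := pow_pos hp.pos _
  have hq'0 : 0 < q ^ (β - 1) := pow_pos hq.pos _
  have hn0 : 0 < (N : ℕ) := N.pos
  have hPsucc : p ^ α = p ^ (α - 1) * p := by
    conv_lhs => rw [show α = (α - 1) + 1 by omega]
    rw [pow_succ]
  have hQsucc : q ^ β = q ^ (β - 1) * q := by
    conv_lhs => rw [show β = (β - 1) + 1 by omega]
    rw [pow_succ]
  set η := ζ ^ (p ^ α) with hηdef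
  set ξ := ζ ^ (q ^ β) with hξdef
  set L : IntermediateField ℚ K := ℚ⟮η⟯ with hLdef
  have hη : IsPrimitiveRoot η (q ^ β) := hζ.pow hn0 hN
  have hξ : IsPrimitiveRoot ξ (p ^ α) := hζ.pow hn0 (by rw [hN]; ring)
  have hξint : IsIntegral ℚ ξ := ((hξ.isIntegral hP0)).tower_top
  have hξintL : IsIntegral L ξ := hξint.tower_top
  have hηmemL : η ∈ L := mem_adjoin_simple_self ℚ η
  set ηL : ↥L := ⟨η, hηmemL⟩ with hηLdef
  set eL : ℕ → ↥L := fun a => ∑ b ∈ Finset.range (q ^ β), (c a b : ↥L) * ηL ^ b with heLdef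
  have heLcoe : ∀ a, (algebraMap ↥L K) (eL a)
      = ∑ b ∈ Finset.range (q ^ β), (c a b : K) * η ^ b := by
    intro a
    rw [heLdef]
    simp only [map_sum, map_mul, map_pow, map_intCast]
    rfl
  set E : (↥L)[X] := polyOf eL (p ^ α) with hEdef
  have hEval : Polynomial.aeval ξ E = 0 := by
    rw [hEdef, polyOf, map_sum]
    simp only [map_mul, map_pow, aeval_C, aeval_X]
    calc ∑ a ∈ Finset.range (p ^ α), (algebraMap ↥L K) (eL a) * ξ ^ a
        = ∑ a ∈ Finset.range (p ^ α), ∑ b ∈ Finset.range (q ^ β),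
            (c a b : K) * (ξ ^ a * η ^ b) := by
          apply Finset.sum_congr rfl
          intro a _
          rw [heLcoe, Finset.sum_mul]
          apply Finset.sum_congr rfl
          intro b _
          ring
    _ = 0 := hsum
  have hdvdE : cyclotomic (p ^ α) ↥L ∣ E := by
    rw [minpoly_pow_eq_cyclotomic hp hq hpq hα hβ N hN K ζ hζ]
    exact minpoly.dvd _ _ hEval
  have hEcoeff : ∀ a, a < p ^ α → eL a = eL (a % p ^ (α - 1)) := by
    intro a ha
    have key := coeff_of_geom_dvd hp'0 hp.pos
      (G := cyclotomic (p ^ α) ↥L) (F := E)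
      (by rw [show α = (α - 1) + 1 by omega]; exact cyclotomic_prime_pow_eq_geom_sum hp)
      (cyclotomic.monic _ _)
      (by rw [natDegree_cyclotomic, show α = (α - 1) + 1 by omega,
            Nat.totient_prime_pow hp (Nat.succ_pos _)]
          rw [Nat.mul_sub, mul_one])
      hdvdE
      (by rw [← hPsucc]; exact polyOf_degree_lt eL (p ^ α))
      a (by rwa [← hPsucc])
    rw [hEdef, polyOf_coeff, polyOf_coeff, if_pos ha, if_pos] at key
    · exact key
    · calc a % p ^ (α - 1) < p ^ (α - 1) := Nat.mod_lt _ hp'0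
      _ ≤ p ^ α := Nat.pow_le_pow_right hp.pos (by omega)
  intro a ha b hb
  -- build D_a over ℤ
  set D : ℤ[X] := polyOf (fun b => c a b - c (a % p ^ (α - 1)) b) (q ^ β) with hDdef
  have hDeval : Polynomial.aeval η D = 0 := by
    rw [hDdef, polyOf, map_sum]
    simp only [map_mul, map_pow, aeval_C, aeval_X]
    have h1 := congrArg (algebraMap ↥L K) (hEcoeff a ha)
    rw [heLcoe, heLcoe] at h1
    have : ∑ b ∈ Finset.range (q ^ β),
        (algebraMap ℤ K) (c a b - c (a % p ^ (α - 1)) b) * η ^ b = 0 := by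
      have := sub_eq_zero_of_eq h1
      rw [← Finset.sum_sub_distrib] at this
      rw [← this]
      apply Finset.sum_congr rfl
      intro b _
      simp only [eq_intCast]
      push_cast
      ring
    exact this
  have hdvdD : cyclotomic (q ^ β) ℤ ∣ D := by
    rw [cyclotomic_eq_minpoly hη hQ0]
    exact minpoly.isIntegrallyClosed_dvd (hη.isIntegral hQ0) hDeval
  have key := coeff_of_geom_dvd hq'0 hq.pos
    (G := cyclotomic (q ^ β) ℤ) (F := D)
    (by rw [show β = (β - 1) + 1 by omega]; exact cyclotomic_prime_pow_eq_geom_sum hq)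
    (cyclotomic.monic _ _)
    (by rw [natDegree_cyclotomic, show β = (β - 1) + 1 by omega,
          Nat.totient_prime_pow hq (Nat.succ_pos _)]
        rw [Nat.mul_sub, mul_one])
    hdvdD
    (by rw [← hQsucc]; exact polyOf_degree_lt _ (q ^ β))
    b (by rwa [← hQsucc])
  rw [hDdef, polyOf_coeff, polyOf_coeff, if_pos hb, if_pos] at key
  · exact key
  · calc b % q ^ (β - 1) < q ^ (β - 1) := Nat.mod_lt _ hq'0
    _ ≤ q ^ β := Nat.pow_le_pow_right hq.pos (by omega)
theorem nonneg_multiple_of_cyclotomic_two_primes (p q α β : ℕ) (hp : p.Prime)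
    (hq : q.Prime) (hpq : p ≠ q) (hα : 1 ≤ α) (hβ : 1 ≤ β)
    (n : ℕ) (hn : n = p ^ α * q ^ β) (g : ℤ[X])
    (hdeg : g.natDegree = n - 1) (hpos : ∀ i, 0 ≤ g.coeff i)
    (hdvd : cyclotomic n ℤ ∣ g) :
    ∃ s₁ s₂ : ℤ[X], (∀ i, 0 ≤ s₁.coeff i) ∧ (∀ i, 0 ≤ s₂.coeff i) ∧
      g = s₁ * (cyclotomic p ℤ).comp (X ^ (n / p)) +
          s₂ * (cyclotomic q ℤ).comp (X ^ (n / q)) := by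
  have hP0 : 0 < p ^ α := pow_pos hp.pos α
  have hQ0 : 0 < q ^ β := pow_pos hq.pos β
  have hp'0 : 0 < p ^ (α - 1) := pow_pos hp.pos _
  have hq'0 : 0 < q ^ (β - 1) := pow_pos hq.pos _
  have hn0 : 0 < n := by rw [hn]; exact Nat.mul_pos hP0 hQ0
  have hco : Nat.Coprime (p ^ α) (q ^ β) :=
    Nat.Coprime.pow α β ((Nat.coprime_primes hp hq).2 hpq)
  have hPp : p ^ α = p ^ (α - 1) * p := by
    conv_lhs => rw [show α = (α - 1) + 1 by omega]
    rw [pow_succ]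
  have hQq : q ^ β = q ^ (β - 1) * q := by
    conv_lhs => rw [show β = (β - 1) + 1 by omega]
    rw [pow_succ]
  have hu1n : (p ^ (α - 1) * q ^ β) * p = n := by rw [hn, hPp]; ring
  have hu2n : (p ^ α * q ^ (β - 1)) * q = n := by rw [hn, hQq]; ring
  have hu1 : n / p = p ^ (α - 1) * q ^ β := by
    rw [← hu1n, Nat.mul_div_cancel _ hp.pos]
  have hu2 : n / q = p ^ α * q ^ (β - 1) := by
    rw [← hu2n, Nat.mul_div_cancel _ hq.pos]
  -- the CRT indexing
  set σ : ℕ → ℕ → ℕ := fun a b => (a * q ^ β + b * p ^ α) % n with hσdef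
  set c : ℕ → ℕ → ℤ := fun a b => g.coeff (σ a b) with hcdef
  have hσlt : ∀ a b, σ a b < n := fun a b => Nat.mod_lt _ hn0
  have himg : (Finset.range (p ^ α) ×ˢ Finset.range (q ^ β)).image
      (fun x : ℕ × ℕ => (x.1 * q ^ β + x.2 * p ^ α) % n) = Finset.range n := by
    have := crt_image (p ^ α) (q ^ β) hP0 hQ0 hco
    rwa [← hn] at this
  have hinj : Set.InjOn (fun x : ℕ × ℕ => (x.1 * q ^ β + x.2 * p ^ α) % n)
      ↑(Finset.range (p ^ α) ×ˢ Finset.range (q ^ β)) := by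
    have := crt_injOn (p ^ α) (q ^ β) hP0 hQ0 hco
    rwa [← hn] at this
  -- the cyclotomic field
  set N : ℕ+ := ⟨n, hn0⟩ with hNdef
  have hNn : (N : ℕ) = n := rfl
  haveI : NeZero ((N : ℕ) : ℚ) := ⟨by exact_mod_cast hn0.ne'⟩
  set K := CyclotomicField N ℚ with hKdef
  haveI : IsCyclotomicExtension {(N : ℕ)} ℚ K := CyclotomicField.isCyclotomicExtension _ _
  set ζ : K := IsCyclotomicExtension.zeta (N : ℕ) ℚ K with hζdef
  have hζ : IsPrimitiveRoot ζ (N : ℕ) := IsCyclotomicExtension.zeta_spec (N : ℕ) ℚ K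
  have hgz : Polynomial.aeval ζ g = 0 := by
    obtain ⟨h, hh⟩ := hdvd
    rw [hh, map_mul]
    have : Polynomial.aeval ζ (cyclotomic n ℤ) = 0 := by
      rw [aeval_def, eval₂_eq_eval_map, map_cyclotomic]
      exact (hζ.isRoot_cyclotomic (by rwa [hNn]))
    rw [this, zero_mul]
  have hdeg' : g.natDegree < n := by rw [hdeg]; omega
  have hsum0 : ∑ i ∈ Finset.range n, g.coeff i • ζ ^ i = 0 := by
    rw [← Polynomial.aeval_eq_sum_range' hdeg' ζ, hgz]
  have hzmod : ∀ y : ℕ, ζ ^ y = ζ ^ (y % n) := by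
    intro y
    conv_lhs => rw [← Nat.mod_add_div y n]
    rw [pow_add, pow_mul]
    have hone : ζ ^ n = 1 := by
      have := hζ.pow_eq_one
      exact this
    rw [hone, one_pow, mul_one]
  have hζσ : ∀ a b, ζ ^ (σ a b) = (ζ ^ q ^ β) ^ a * (ζ ^ p ^ α) ^ b := by
    intro a b
    rw [hσdef]
    simp only
    rw [← hzmod, pow_add, mul_comm a (q ^ β), mul_comm b (p ^ α), pow_mul, pow_mul]
  have hre : ∑ x ∈ Finset.range (p ^ α) ×ˢ Finset.range (q ^ β),
      g.coeff ((x.1 * q ^ β + x.2 * p ^ α) % n) • ζ ^ ((x.1 * q ^ β + x.2 * p ^ α) % n) = 0 := by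
    rw [← Finset.sum_image (f := fun i => g.coeff i • ζ ^ i)
      (g := fun x : ℕ × ℕ => (x.1 * q ^ β + x.2 * p ^ α) % n)
      (fun x hx y hy hxy => hinj hx hy hxy)]
    rw [himg]
    exact hsum0
  have hsum : ∑ a ∈ Finset.range (p ^ α), ∑ b ∈ Finset.range (q ^ β),
      (c a b : K) * ((ζ ^ q ^ β) ^ a * (ζ ^ p ^ α) ^ b) = 0 := by
    rw [← Finset.sum_product']
    rw [← hre]
    apply Finset.sum_congr rfl
    intro x _
    rw [hcdef]
    simp only
    rw [← hζσ, zsmul_eq_mul]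
  have hrel := coeff_relation hp hq hpq hα hβ N (by rw [hNn, hn]) K ζ hζ c hsum
  -- define z, μ, m
  set z : ℕ → ℕ → ℤ := fun a w => c a w - c (a % p ^ (α - 1)) w with hzdef
  have hzkey : ∀ a, a < p ^ α → ∀ b, b < q ^ β →
      c a b = c (a % p ^ (α - 1)) b + z a (b % q ^ (β - 1)) := by
    intro a ha b hb
    have h := hrel a ha b hb
    rw [hzdef]
    simp only
    omega
  have hne : (Finset.range p).Nonempty := ⟨0, Finset.mem_range.2 hp.pos⟩
  set μ : ℕ → ℕ → ℤ :=
    fun j w => (Finset.range p).inf' hne (fun k => z (j + k * p ^ (α - 1)) w) with hμdef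
  set m : ℕ → ℕ → ℤ := fun j b => c j b + μ j (b % q ^ (β - 1)) with hmdef
  have hjk_lt : ∀ j k, j < p ^ (α - 1) → k < p → j + k * p ^ (α - 1) < p ^ α := by
    intro j k hj hk
    calc j + k * p ^ (α - 1) < p ^ (α - 1) + k * p ^ (α - 1) := by omega
    _ = (k + 1) * p ^ (α - 1) := by ring
    _ ≤ p * p ^ (α - 1) := Nat.mul_le_mul_right _ (by omega)
    _ = p ^ α := by rw [hPp]; ring
  have hjk_mod : ∀ j k, j < p ^ (α - 1) → (j + k * p ^ (α - 1)) % p ^ (α - 1) = j := by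
    intro j k hj
    rw [Nat.add_mul_mod_self_right, Nat.mod_eq_of_lt hj]
  have hm_nonneg : ∀ j b, j < p ^ (α - 1) → b < q ^ β → 0 ≤ m j b := by
    intro j b hj hb
    obtain ⟨k, hk, hkeq⟩ := Finset.exists_mem_eq_inf' hne (fun k => z (j + k * p ^ (α - 1)) (b % q ^ (β - 1)))
    rw [hmdef]
    simp only
    rw [hμdef]
    simp only
    rw [hkeq]
    have hklt := Finset.mem_range.1 hk
    have halt := hjk_lt j k hj hklt
    have := hzkey (j + k * p ^ (α - 1)) halt b hb
    rw [hjk_mod j k hj] at this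
    rw [← this]
    exact hpos _
  have hz_nonneg : ∀ a w, a < p ^ α → 0 ≤ z a w - μ (a % p ^ (α - 1)) w := by
    intro a w ha
    have hdiv : a % p ^ (α - 1) + (a / p ^ (α - 1)) * p ^ (α - 1) = a := Nat.mod_add_div' a _
    have hmem : a / p ^ (α - 1) ∈ Finset.range p := by
      apply Finset.mem_range.2
      apply Nat.div_lt_of_lt_mul
      rw [← hPp]
      exact ha
    have h := Finset.inf'_le (fun k => z (a % p ^ (α - 1) + k * p ^ (α - 1)) w) hmem
    rw [hdiv] at h
    simp only [hμdef]
    exact sub_nonneg.2 h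
  -- the two polynomials
  set s₁ : ℤ[X] := ∑ j ∈ Finset.range (p ^ (α - 1)), ∑ b ∈ Finset.range (q ^ β),
    C (m j b) * X ^ (σ j b % (p ^ (α - 1) * q ^ β)) with hs₁def
  set s₂ : ℤ[X] := ∑ a ∈ Finset.range (p ^ α), ∑ w ∈ Finset.range (q ^ (β - 1)),
    C (z a w - μ (a % p ^ (α - 1)) w) * X ^ (σ a w % (p ^ α * q ^ (β - 1))) with hs₂def
  refine ⟨s₁, s₂, ?_, ?_, ?_⟩
  · intro i
    rw [hs₁def, Polynomial.finset_sum_coeff]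
    apply Finset.sum_nonneg
    intro j hj
    rw [Polynomial.finset_sum_coeff]
    apply Finset.sum_nonneg
    intro b hb
    rw [Polynomial.coeff_C_mul, Polynomial.coeff_X_pow]
    apply mul_nonneg (hm_nonneg j b (Finset.mem_range.1 hj) (Finset.mem_range.1 hb))
    split <;> norm_num
  · intro i
    rw [hs₂def, Polynomial.finset_sum_coeff]
    apply Finset.sum_nonneg
    intro a ha
    rw [Polynomial.finset_sum_coeff]
    apply Finset.sum_nonneg
    intro w hw
    rw [Polynomial.coeff_C_mul, Polynomial.coeff_X_pow]
    apply mul_nonneg (hz_nonneg a w (Finset.mem_range.1 ha))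
    split <;> norm_num
  · -- the identity
    haveI : Fact p.Prime := ⟨hp⟩
    haveI : Fact q.Prime := ⟨hq⟩
    have hcomp1 : (cyclotomic p ℤ).comp (X ^ (n / p))
        = ∑ k ∈ Finset.range p, ((X : ℤ[X]) ^ (p ^ (α - 1) * q ^ β)) ^ k := by
      rw [cyclotomic_prime ℤ p, Polynomial.sum_comp, hu1]
      apply Finset.sum_congr rfl
      intro k _
      rw [Polynomial.X_pow_comp]
    have hcomp2 : (cyclotomic q ℤ).comp (X ^ (n / q))
        = ∑ l ∈ Finset.range q, ((X : ℤ[X]) ^ (p ^ α * q ^ (β - 1))) ^ l := by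
      rw [cyclotomic_prime ℤ q, Polynomial.sum_comp, hu2]
      apply Finset.sum_congr rfl
      intro l _
      rw [Polynomial.X_pow_comp]
    have hexp1 : ∀ j b k,
        (σ j b + k * (p ^ (α - 1) * q ^ β)) % n = σ (j + k * p ^ (α - 1)) b := by
      intro j b k
      simp only [hσdef]
      rw [Nat.mod_add_mod]
      congr 1
      ring
    have hexp2 : ∀ a w l,
        (σ a w + l * (p ^ α * q ^ (β - 1))) % n = σ a (w + l * q ^ (β - 1)) := by
      intro a w l
      simp only [hσdef]
      rw [Nat.mod_add_mod]
      congr 1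
      ring
    have hwl_mod : ∀ w l, w < q ^ (β - 1) → (w + l * q ^ (β - 1)) % q ^ (β - 1) = w := by
      intro w l hw
      rw [Nat.add_mul_mod_self_right, Nat.mod_eq_of_lt hw]
    have hs1eq : ∑ a ∈ Finset.range (p ^ α), ∑ b ∈ Finset.range (q ^ β),
        C (m (a % p ^ (α - 1)) b) * X ^ (σ a b)
        = s₁ * ((cyclotomic p ℤ).comp (X ^ (n / p))) := by
      rw [hcomp1]
      calc ∑ a ∈ Finset.range (p ^ α), ∑ b ∈ Finset.range (q ^ β),
          C (m (a % p ^ (α - 1)) b) * X ^ (σ a b)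
          = ∑ j ∈ Finset.range (p ^ (α - 1)), ∑ k ∈ Finset.range p,
              ∑ b ∈ Finset.range (q ^ β),
              C (m ((j + k * p ^ (α - 1)) % p ^ (α - 1)) b) * X ^ (σ (j + k * p ^ (α - 1)) b) := by
            rw [hPp]
            exact sum_range_mul (p ^ (α - 1)) p hp'0 _
        _ = ∑ j ∈ Finset.range (p ^ (α - 1)), ∑ b ∈ Finset.range (q ^ β),
              ∑ k ∈ Finset.range p,
              C (m j b) * X ^ (σ (j + k * p ^ (α - 1)) b) := by
            apply Finset.sum_congr rfl
            intro j hj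
            rw [Finset.sum_comm]
            apply Finset.sum_congr rfl
            intro b _
            apply Finset.sum_congr rfl
            intro k _
            rw [hjk_mod j k (Finset.mem_range.1 hj)]
        _ = ∑ j ∈ Finset.range (p ^ (α - 1)), ∑ b ∈ Finset.range (q ^ β),
              C (m j b) * (X ^ (σ j b % (p ^ (α - 1) * q ^ β)) *
                ∑ k ∈ Finset.range p, ((X : ℤ[X]) ^ (p ^ (α - 1) * q ^ β)) ^ k) := by
            apply Finset.sum_congr rfl
            intro j hj
            apply Finset.sum_congr rfl
            intro b hb
            rw [blocksum (p ^ (α - 1) * q ^ β) p (σ j b) (Nat.mul_pos hp'0 hQ0)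
              (by rw [hu1n]; exact hσlt j b)]
            rw [Finset.mul_sum]
            apply Finset.sum_congr rfl
            intro k _
            rw [hu1n, hexp1]
        _ = s₁ * ∑ k ∈ Finset.range p, ((X : ℤ[X]) ^ (p ^ (α - 1) * q ^ β)) ^ k := by
            rw [hs₁def, Finset.sum_mul]
            apply Finset.sum_congr rfl
            intro j _
            rw [Finset.sum_mul]
            apply Finset.sum_congr rfl
            intro b _
            rw [mul_assoc]
    have hs2eq : ∑ a ∈ Finset.range (p ^ α), ∑ b ∈ Finset.range (q ^ β),
        C (z a (b % q ^ (β - 1)) - μ (a % p ^ (α - 1)) (b % q ^ (β - 1))) * X ^ (σ a b)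
        = s₂ * ((cyclotomic q ℤ).comp (X ^ (n / q))) := by
      rw [hcomp2]
      calc ∑ a ∈ Finset.range (p ^ α), ∑ b ∈ Finset.range (q ^ β),
          C (z a (b % q ^ (β - 1)) - μ (a % p ^ (α - 1)) (b % q ^ (β - 1))) * X ^ (σ a b)
          = ∑ a ∈ Finset.range (p ^ α), ∑ w ∈ Finset.range (q ^ (β - 1)),
              ∑ l ∈ Finset.range q,
              C (z a ((w + l * q ^ (β - 1)) % q ^ (β - 1))
                - μ (a % p ^ (α - 1)) ((w + l * q ^ (β - 1)) % q ^ (β - 1)))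
                * X ^ (σ a (w + l * q ^ (β - 1))) := by
            apply Finset.sum_congr rfl
            intro a _
            rw [hQq]
            exact sum_range_mul (q ^ (β - 1)) q hq'0 _
        _ = ∑ a ∈ Finset.range (p ^ α), ∑ w ∈ Finset.range (q ^ (β - 1)),
              C (z a w - μ (a % p ^ (α - 1)) w) *
                (X ^ (σ a w % (p ^ α * q ^ (β - 1))) *
                  ∑ l ∈ Finset.range q, ((X : ℤ[X]) ^ (p ^ α * q ^ (β - 1))) ^ l) := by
            apply Finset.sum_congr rfl
            intro a _
            apply Finset.sum_congr rfl
            intro w hw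
            rw [blocksum (p ^ α * q ^ (β - 1)) q (σ a w) (Nat.mul_pos hP0 hq'0)
              (by rw [hu2n]; exact hσlt a w)]
            rw [Finset.mul_sum]
            apply Finset.sum_congr rfl
            intro l _
            rw [hu2n, hexp2, hwl_mod w l (Finset.mem_range.1 hw)]
        _ = s₂ * ∑ l ∈ Finset.range q, ((X : ℤ[X]) ^ (p ^ α * q ^ (β - 1))) ^ l := by
            rw [hs₂def, Finset.sum_mul]
            apply Finset.sum_congr rfl
            intro a _
            rw [Finset.sum_mul]
            apply Finset.sum_congr rfl
            intro w _
            rw [mul_assoc]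
    have hgsum : g = ∑ a ∈ Finset.range (p ^ α), ∑ b ∈ Finset.range (q ^ β),
        C (c a b) * X ^ (σ a b) := by
      conv_lhs => rw [Polynomial.as_sum_range' g n hdeg']
      rw [← Finset.sum_product']
      rw [← himg, Finset.sum_image (fun x hx y hy hxy => hinj hx hy hxy)]
      apply Finset.sum_congr rfl
      intro x _
      rw [← Polynomial.C_mul_X_pow_eq_monomial]
    rw [hgsum, ← hs1eq, ← hs2eq, ← Finset.sum_add_distrib]
    apply Finset.sum_congr rfl
    intro a ha
    rw [← Finset.sum_add_distrib]
    apply Finset.sum_congr rfl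
    intro b hb
    rw [← add_mul, ← C_add]
    congr 2
    have hk := hzkey a (Finset.mem_range.1 ha) b (Finset.mem_range.1 hb)
    simp only [hmdef]
    omega
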